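/- Let Q ⊆ X be closed convex with nonempty interior, x̂ ∈ Q, d ∈ cl cone(Q − x̂), and C := cone(cone(Q° − x̂) − d). Let φ(·) = −⟨x*, ·⟩ + t be a continuous affine function. Then φ is bounded from below on C if and only if x* ∈ N(Q; x̂) and ⟨x*, d⟩ = 0. Moreover, C⁺ = {φ(·) = −⟨x*, ·⟩ + t : x* ∈ N(Q; x̂), ⟨x*, d⟩ = 0, t ≥ 0}. -/

import Mathlib

open Filter Set Pointwise

/-- The cone generated by a set `S` (with nonnegative scalars). -/
def coneOf {X : Type*} [NormedAddCommGroup X] [NormedSpace ℝ X] (S : Set X) : Set X :=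
  {y | ∃ t : ℝ, 0 ≤ t ∧ ∃ s ∈ S, y = t • s}

/-- The second-order admissible variation set `Q°(x₀, d)` of a convex set `Q`. -/
def Qcirc {X : Type*} [NormedAddCommGroup X] [NormedSpace ℝ X]
    (Q : Set X) (x₀ d : X) : Set X :=
  {z | ∃ ε' > (0:ℝ), ∀ ε : ℝ, 0 < ε → ε < ε' → ∀ w : X, ‖w‖ < ε' →
    ∃ q ∈ Q, z = (ε ^ 2)⁻¹ • (q - x₀ - ε • d) + w}

/-- `φ : X → ℝ` is a continuous affine function. -/
def IsAffineFn {X : Type*} [NormedAddCommGroup X] [NormedSpace ℝ X] (φ : X → ℝ) : Prop :=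
  ∃ (x' : X →L[ℝ] ℝ) (t : ℝ), ∀ x, φ x = x' x + t

/-- The adjoint set `C⁺` of a set `C`: continuous affine functions nonnegative on `C`. -/
def adjointSet {X : Type*} [NormedAddCommGroup X] [NormedSpace ℝ X] (C : Set X) :
    Set (X → ℝ) :=
  {φ | IsAffineFn φ ∧ ∀ x ∈ C, 0 ≤ φ x}

/-- The normal cone to a convex set `Q` at `x₀`. -/
def normalCone {X : Type*} [NormedAddCommGroup X] [NormedSpace ℝ X]
    (Q : Set X) (x₀ : X) : Set (X →L[ℝ] ℝ) :=
  {x' | ∀ y ∈ Q, x' y - x' x₀ ≤ 0}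

lemma memC_iff {X : Type*} [NormedAddCommGroup X] [NormedSpace ℝ X]
    (Q : Set X) (x₀ d z : X) :
    z ∈ coneOf ((fun y => y - d) '' coneOf ((fun q => q - x₀) '' interior Q)) ↔
      ∃ s r : ℝ, 0 ≤ s ∧ 0 ≤ r ∧ ∃ q ∈ interior Q, z = s • (r • (q - x₀) - d) := by
  constructor
  · rintro ⟨s, hs, w, ⟨v, ⟨r, hr, u, ⟨q, hq, rfl⟩, rfl⟩, rfl⟩, rfl⟩
    exact ⟨s, r, hs, hr, q, hq, rfl⟩
  · rintro ⟨s, r, hs, hr, q, hq, rfl⟩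
    exact ⟨s, hs, r • (q - x₀) - d, ⟨r • (q - x₀), ⟨r, hr, q - x₀, ⟨q, hq, rfl⟩, rfl⟩, rfl⟩, rfl⟩

theorem stmt17 {X : Type*} [NormedAddCommGroup X] [NormedSpace ℝ X]
    (Q : Set X) (hQc : IsClosed Q) (hQconv : Convex ℝ Q)
    (hQint : (interior Q).Nonempty) {x₀ : X} (hx₀ : x₀ ∈ Q) {d : X}
    (hd : d ∈ closure (coneOf ((fun q => q - x₀) '' Q))) :
    (∀ (x' : X →L[ℝ] ℝ) (t : ℝ),
      ((∃ m : ℝ, ∀ z ∈ coneOf ((fun y => y - d) '' coneOf ((fun q => q - x₀) '' interior Q)),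
          m ≤ -(x' z) + t) ↔
        (x' ∈ normalCone Q x₀ ∧ x' d = 0))) ∧
    adjointSet (coneOf ((fun y => y - d) '' coneOf ((fun q => q - x₀) '' interior Q))) =
      {φ : X → ℝ | ∃ (x' : X →L[ℝ] ℝ) (t : ℝ),
        x' ∈ normalCone Q x₀ ∧ x' d = 0 ∧ 0 ≤ t ∧ ∀ z, φ z = -(x' z) + t} := by
  set C := coneOf ((fun y => y - d) '' coneOf ((fun q => q - x₀) '' interior Q)) with hC
  obtain ⟨q₀, hq₀⟩ := hQint
  -- 0 ∈ C
  have h0C : (0 : X) ∈ C := by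
    rw [memC_iff]
    exact ⟨0, 0, le_refl _, le_refl _, q₀, hq₀, by simp⟩
  -- if x' ∈ N and x' d = 0 then x' ≤ 0 on C
  have key : ∀ x' : X →L[ℝ] ℝ, x' ∈ normalCone Q x₀ → x' d = 0 →
      ∀ z ∈ C, x' z ≤ 0 := by
    intro x' hN hd0 z hz
    rw [memC_iff] at hz
    obtain ⟨s, r, hs, hr, q, hq, rfl⟩ := hz
    have hq' : x' q - x' x₀ ≤ 0 := hN q (interior_subset hq)
    have : x' (s • (r • (q - x₀) - d)) = s * (r * (x' q - x' x₀) - x' d) := by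
      rw [map_smul, map_sub, map_smul, map_sub, smul_eq_mul, smul_eq_mul]
    rw [this, hd0]
    have : r * (x' q - x' x₀) ≤ 0 := mul_nonpos_of_nonneg_of_nonpos hr hq'
    nlinarith
  -- main iff
  have main : ∀ (x' : X →L[ℝ] ℝ) (t : ℝ),
      ((∃ m : ℝ, ∀ z ∈ C, m ≤ -(x' z) + t) ↔ (x' ∈ normalCone Q x₀ ∧ x' d = 0)) := by
    intro x' t
    constructor
    · rintro ⟨m, hm⟩
      -- x' ≤ 0 on C
      have hle : ∀ z ∈ C, x' z ≤ 0 := by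
        intro z hz
        by_contra h
        push_neg at h
        -- scale z
        have hmem : ∀ n : ℝ, 0 ≤ n → n • z ∈ C := by
          intro n hn
          rw [memC_iff] at hz ⊢
          obtain ⟨s, r, hs, hr, q, hq, rfl⟩ := hz
          exact ⟨n * s, r, mul_nonneg hn hs, hr, q, hq, (smul_smul n s _)⟩
        have hmt : m ≤ t := by have := hm 0 h0C; simpa using this
        have hn : (0:ℝ) ≤ (t - m + 1) / x' z := div_nonneg (by linarith) h.le
        have := hm _ (hmem _ hn)
        rw [map_smul] at this
        have hxz : ((t - m + 1) / x' z) • x' z = t - m + 1 := by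
          rw [smul_eq_mul, div_mul_cancel₀ _ (ne_of_gt h)]
        rw [smul_eq_mul] at this hxz
        nlinarith
      -- x'(q - x₀) ≤ 0 for q in interior
      have hint : ∀ q ∈ interior Q, x' q - x' x₀ ≤ 0 := by
        intro q hq
        by_contra h
        push_neg at h
        have hr : (0:ℝ) ≤ (x' d + 1) / (x' q - x' x₀) ∨ True := Or.inr trivial
        -- from hle with s = 1, r arbitrary:  r * (x' q - x' x₀) - x' d ≤ 0
        have hgen : ∀ r : ℝ, 0 ≤ r → r * (x' q - x' x₀) - x' d ≤ 0 := by
          intro r hrn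
          have hz : (1:ℝ) • (r • (q - x₀) - d) ∈ C := by
            rw [memC_iff]; exact ⟨1, r, zero_le_one, hrn, q, hq, rfl⟩
          have := hle _ hz
          simpa [map_smul, map_sub, smul_eq_mul, mul_comm] using this
        rcases le_or_gt (x' d) 0 with hxd | hxd
        · have := hgen 1 zero_le_one; nlinarith
        · have hr0 : (0:ℝ) ≤ (x' d + 1) / (x' q - x' x₀) := by positivity
          have := hgen _ hr0
          rw [div_mul_cancel₀ _ (ne_of_gt h)] at this
          linarith
      -- x' d ≥ 0 : from hle with s = 1, r = 0
      have hdge : 0 ≤ x' d := by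
        have hz : (1:ℝ) • ((0:ℝ) • (q₀ - x₀) - d) ∈ C := by
          rw [memC_iff]; exact ⟨1, 0, zero_le_one, le_refl _, q₀, hq₀, rfl⟩
        have := hle _ hz
        simpa using this
      -- extend hint to all of Q by the line-segment limit argument
      have hN : x' ∈ normalCone Q x₀ := by
        intro y hy
        set A := x' y - x' x₀ with hA
        set B := x' q₀ - x' x₀ with hB
        have hseg : ∀ θ : ℝ, 0 < θ → θ < 1 → (1 - θ) * A + θ * B ≤ 0 := by
          intro θ hθ0 hθ1
          have hmem : (1 - θ) • y + θ • q₀ ∈ interior Q :=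
            hQconv.combo_self_interior_mem_interior hy hq₀ (by linarith) hθ0 (by ring)
          have := hint _ hmem
          rw [map_add, map_smul, map_smul, smul_eq_mul, smul_eq_mul] at this
          rw [hA, hB]; linarith
        by_contra h
        push_neg at h
        rcases le_or_gt 0 B with hBn | hBn
        · have := hseg (1/2) (by norm_num) (by norm_num)
          nlinarith
        · set θ := A / (2 * (A - B)) with hθdef
          have hAB : 0 < A - B := by linarith
          have hθ0 : 0 < θ := by positivity
          have hθ1 : θ < 1 := by
            rw [hθdef, div_lt_one (by positivity)]
            linarith
          have hval : θ * (2 * (A - B)) = A := div_mul_cancel₀ _ (by positivity)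
          have := hseg θ hθ0 hθ1
          nlinarith
      have hdle : x' d ≤ 0 := by
        have hsub : coneOf ((fun q => q - x₀) '' Q) ⊆ {y | x' y ≤ 0} := by
          rintro w ⟨s, hs, v, ⟨q, hq, rfl⟩, rfl⟩
          simp only [mem_setOf_eq]
          have h1 : x' (s • ((fun q => q - x₀) q)) = s * (x' q - x' x₀) := by
            simp only [map_smul, map_sub, smul_eq_mul]
          rw [h1]
          exact mul_nonpos_of_nonneg_of_nonpos hs (hN q hq)
        have hclosed : IsClosed {y : X | x' y ≤ 0} :=
          isClosed_le x'.continuous continuous_const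
        exact closure_minimal hsub hclosed hd
      exact ⟨hN, le_antisymm hdle hdge⟩
    · rintro ⟨hN, hd0⟩
      exact ⟨t, fun z hz => by have := key x' hN hd0 z hz; linarith⟩
  refine ⟨main, ?_⟩
  ext φ
  constructor
  · rintro ⟨⟨y', t, hφ⟩, hpos⟩
    refine ⟨-y', t, ?_, ?_, ?_, fun z => by simp [hφ z]⟩
    · exact ((main (-y') t).mp ⟨0, fun z hz => by simpa [hφ z] using hpos z hz⟩).1
    · exact ((main (-y') t).mp ⟨0, fun z hz => by simpa [hφ z] using hpos z hz⟩).2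
    · have := hpos 0 h0C; simpa [hφ 0] using this
  · rintro ⟨x', t, hN, hd0, ht, hφ⟩
    refine ⟨⟨-x', t, fun x => by simp [hφ x]⟩, fun z hz => ?_⟩
    have := key x' hN hd0 z hz
    rw [hφ z]; linarith
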